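/- In the bead-reversal setting on G (with e_uv = r_u + r_v − gcd(r_u, r_v) on every edge and all bead counts multiples of the respective gcd), suppose the initial configuration satisfies σ(κ) < ρ(κ) for every simple cycle κ of G. Then every configuration reachable by a finite sequence of bead-reversal steps, each performed at an enabled vertex, again satisfies σ(κ) < ρ(κ) for every simple cycle κ, its induced orientation is acyclic, and hence (if G has at least one vertex) at least one vertex is enabled. In particular, every bead-reversal computation started from such a configuration is deadlock-free. -/

import Mathlib

variable {V : Type*}

attribute [local instance] Classical.propDecidable

/-- `a` is a bead configuration on `G` (with bead numbers `r`): `a u v` is the number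
of beads at `u`'s end of the edge `{u, v}`; each edge `{u, v}` carries
`e_uv = r u + r v − gcd (r u) (r v)` beads in total, and every bead count is a
multiple of `gcd (r u) (r v)`. -/
def IsBeadConfig (G : SimpleGraph V) (r : V → ℕ) (a : V → V → ℕ) : Prop :=
  ∀ u v, G.Adj u v →
    a u v + a v u = r u + r v - Nat.gcd (r u) (r v) ∧ Nat.gcd (r u) (r v) ∣ a u v

/-- A vertex `v` is enabled when every edge incident to `v` carries at least `r v`
beads at `v`'s end. -/
def Enabled (G : SimpleGraph V) (r : V → ℕ) (a : V → V → ℕ) (v : V) : Prop :=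
  ∀ u, G.Adj v u → r v ≤ a v u

/-- The bead-reversal step at vertex `v`: `r v` beads are moved from `v`'s end to the
opposite end of every edge incident to `v`. -/
noncomputable def beadStep (G : SimpleGraph V) (r : V → ℕ) (a : V → V → ℕ) (v : V) :
    V → V → ℕ :=
  fun x y =>
    if x = v ∧ G.Adj v y then a x y - r v
    else if y = v ∧ G.Adj v x then a x y + r v
    else a x y

/-- `σ⁺(κ)`: the sum, over the edges of the cycle `κ` traversed as `u → v` along the
traversal direction of `κ`, of the number of beads at `v`'s end. -/
def sigmaPlus {G : SimpleGraph V} {w : V} (a : V → V → ℕ) (κ : G.Walk w w) : ℕ :=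
  (κ.darts.map (fun d => a d.toProd.2 d.toProd.1)).sum

/-- `σ⁻(κ)`: the sum, over the edges of the cycle `κ` traversed as `u → v` along the
traversal direction opposite to that of `κ`, of the number of beads at `u`'s end. -/
def sigmaMinus {G : SimpleGraph V} {w : V} (a : V → V → ℕ) (κ : G.Walk w w) : ℕ :=
  (κ.darts.map (fun d => a d.toProd.1 d.toProd.2)).sum

/-- `ρ(κ)`: the sum of `r v` over the vertices `v` of the cycle `κ`. -/
def rho {G : SimpleGraph V} {w : V} (r : V → ℕ) (κ : G.Walk w w) : ℕ :=
  (κ.support.tail.map r).sum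

/-- The orientation of `G` induced by a bead configuration: the edge `{u, v}` is
directed `u → v` exactly when there are at least `r v` beads at `v`'s end. -/
def inducedOrientation (G : SimpleGraph V) (r : V → ℕ) (a : V → V → ℕ) :
    V → V → Prop :=
  fun u v => G.Adj u v ∧ r v ≤ a v u

/-- One bead-reversal step: some enabled vertex performs a bead reversal. -/
noncomputable def BeadStepRel (G : SimpleGraph V) (r : V → ℕ) :
    (V → V → ℕ) → (V → V → ℕ) → Prop :=
  fun a a' => ∃ v, Enabled G r a v ∧ a' = beadStep G r a v

section Lemmas

variable {G : SimpleGraph V} {r : V → ℕ} {a : V → V → ℕ} {v : V}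

lemma key_edge (hr : ∀ v, 0 < r v) (hconf : IsBeadConfig G r a) {u v : V} (h : G.Adj u v) :
    ¬ (r u ≤ a u v ∧ r v ≤ a v u) ∧ (r u ≤ a u v ∨ r v ≤ a v u) := by
  obtain ⟨hsum, hdvd⟩ := hconf u v h
  obtain ⟨hsum', hdvd'⟩ := hconf v u h.symm
  rw [Nat.gcd_comm] at hsum' hdvd'
  set g := Nat.gcd (r u) (r v) with hg
  have hgu : g ∣ r u := Nat.gcd_dvd_left _ _
  have hgv : g ∣ r v := Nat.gcd_dvd_right _ _
  have hgpos : 0 < g := Nat.gcd_pos_of_pos_left _ (hr u)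
  have hgle : g ≤ r u := Nat.le_of_dvd (hr u) hgu
  constructor
  · rintro ⟨h1, h2⟩; omega
  · by_contra hcon
    push_neg at hcon
    obtain ⟨h1, h2⟩ := hcon
    have e1 : a u v + g ≤ r u := by
      have h3 : g ∣ r u - a u v := Nat.dvd_sub hgu hdvd
      have h4 : g ≤ r u - a u v := Nat.le_of_dvd (by omega) h3
      omega
    have e2 : a v u + g ≤ r v := by
      have h3 : g ∣ r v - a v u := Nat.dvd_sub hgv hdvd'
      have h4 : g ≤ r v - a v u := Nat.le_of_dvd (by omega) h3
      omega
    omega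

lemma beadStep_fst {x y : V} (h : x = v) (h2 : G.Adj v y) :
    beadStep G r a v x y = a x y - r v := if_pos ⟨h, h2⟩

lemma beadStep_snd {x y : V} (hx : x ≠ v) (h : y = v) (h2 : G.Adj v x) :
    beadStep G r a v x y = a x y + r v := by
  unfold beadStep
  rw [if_neg, if_pos ⟨h, h2⟩]
  rintro ⟨rfl, -⟩; exact hx rfl

lemma beadStep_other {x y : V} (hx : x ≠ v) (hy : y ≠ v) :
    beadStep G r a v x y = a x y := by
  unfold beadStep
  rw [if_neg, if_neg]
  · rintro ⟨rfl, -⟩; exact hy rfl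
  · rintro ⟨rfl, -⟩; exact hx rfl

lemma beadStep_config (hconf : IsBeadConfig G r a) (hv : Enabled G r a v) :
    IsBeadConfig G r (beadStep G r a v) := by
  intro x y hxy
  have hne : x ≠ y := hxy.ne
  obtain ⟨hsum, hdvd⟩ := hconf x y hxy
  by_cases hx : x = v
  · subst hx
    rw [beadStep_fst rfl hxy, beadStep_snd (Ne.symm hne) rfl hxy]
    have hle : r x ≤ a x y := hv y hxy
    refine ⟨by omega, Nat.dvd_sub hdvd (Nat.gcd_dvd_left _ _)⟩
  · by_cases hy : y = v
    · subst hy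
      rw [beadStep_snd hx rfl hxy.symm, beadStep_fst rfl hxy.symm]
      have hle : r y ≤ a y x := hv x hxy.symm
      refine ⟨by omega, Nat.dvd_add hdvd (Nat.gcd_dvd_right _ _)⟩
    · rw [beadStep_other hx hy, beadStep_other hy hx]
      exact ⟨hsum, hdvd⟩

/-- potential function for the telescoping argument -/
noncomputable def Fpot (r : V → ℕ) (v : V) (x : V) : ℤ := if x = v then (r v : ℤ) else 0

lemma dart_plus (hv : Enabled G r a v) {x y : V} (hxy : G.Adj x y) :
    ((beadStep G r a v) y x : ℤ) = (a y x : ℤ) + Fpot r v x - Fpot r v y := by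
  by_cases hy : y = v
  · subst hy
    have hx : x ≠ y := fun h => (h ▸ hxy).ne rfl
    rw [beadStep_fst rfl hxy.symm]
    have hle : r y ≤ a y x := hv x hxy.symm
    simp [Fpot, hx, Nat.cast_sub hle]
  · by_cases hx : x = v
    · subst hx
      rw [beadStep_snd hy rfl hxy]
      simp only [Fpot, if_pos rfl, if_neg hy]
      push_cast; ring
    · rw [beadStep_other hy hx]
      simp [Fpot, hx, hy]

lemma dart_minus (hv : Enabled G r a v) {x y : V} (hxy : G.Adj x y) :
    ((beadStep G r a v) x y : ℤ) = (a x y : ℤ) + Fpot r v y - Fpot r v x := by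
  have := dart_plus hv hxy.symm
  exact this

lemma sum_plus (hv : Enabled G r a v) {x y : V} (p : G.Walk x y) :
    (p.darts.map (fun d => ((beadStep G r a v) d.toProd.2 d.toProd.1 : ℤ))).sum
      = (p.darts.map (fun d => (a d.toProd.2 d.toProd.1 : ℤ))).sum
        + Fpot r v x - Fpot r v y := by
  induction p with
  | nil => simp
  | @cons x z y h q ih =>
    rw [SimpleGraph.Walk.darts_cons, List.map_cons, List.sum_cons,
      List.map_cons, List.sum_cons, ih, dart_plus hv h]
    ring

lemma sum_minus (hv : Enabled G r a v) {x y : V} (p : G.Walk x y) :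
    (p.darts.map (fun d => ((beadStep G r a v) d.toProd.1 d.toProd.2 : ℤ))).sum
      = (p.darts.map (fun d => (a d.toProd.1 d.toProd.2 : ℤ))).sum
        + Fpot r v y - Fpot r v x := by
  induction p with
  | nil => simp
  | @cons x z y h q ih =>
    rw [SimpleGraph.Walk.darts_cons, List.map_cons, List.sum_cons,
      List.map_cons, List.sum_cons, ih, dart_minus hv h]
    ring

lemma sigmaPlus_beadStep (hv : Enabled G r a v) {w : V} (κ : G.Walk w w) :
    sigmaPlus (beadStep G r a v) κ = sigmaPlus a κ := by
  have h := sum_plus hv κ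
  have cast : ∀ b : V → V → ℕ, ((sigmaPlus b κ : ℕ) : ℤ)
      = (κ.darts.map (fun d => (b d.toProd.2 d.toProd.1 : ℤ))).sum := by
    intro b
    unfold sigmaPlus
    rw [Nat.cast_list_sum, List.map_map]
    rfl
  have : ((sigmaPlus (beadStep G r a v) κ : ℕ) : ℤ) = ((sigmaPlus a κ : ℕ) : ℤ) := by
    rw [cast, cast, h]; ring
  exact_mod_cast this

lemma sigmaMinus_beadStep (hv : Enabled G r a v) {w : V} (κ : G.Walk w w) :
    sigmaMinus (beadStep G r a v) κ = sigmaMinus a κ := by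
  have h := sum_minus hv κ
  have cast : ∀ b : V → V → ℕ, ((sigmaMinus b κ : ℕ) : ℤ)
      = (κ.darts.map (fun d => (b d.toProd.1 d.toProd.2 : ℤ))).sum := by
    intro b
    unfold sigmaMinus
    rw [Nat.cast_list_sum, List.map_map]
    rfl
  have : ((sigmaMinus (beadStep G r a v) κ : ℕ) : ℤ) = ((sigmaMinus a κ : ℕ) : ℤ) := by
    rw [cast, cast, h]; ring
  exact_mod_cast this

end Lemmas

section Acyclic

variable {G : SimpleGraph V} {r : V → ℕ} {a : V → V → ℕ}

/-- A walk all of whose darts are directed along the induced orientation. -/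
def OrientedW (G : SimpleGraph V) (r : V → ℕ) (a : V → V → ℕ) {x y : V}
    (p : G.Walk x y) : Prop :=
  ∀ d ∈ p.darts, r d.toProd.2 ≤ a d.toProd.2 d.toProd.1

lemma no_oriented_closed (hr : ∀ v, 0 < r v) (hconf : IsBeadConfig G r a)
    (hσ : ∀ (w : V) (κ : G.Walk w w), κ.IsCycle →
      max (sigmaPlus a κ) (sigmaMinus a κ) < rho r κ) :
    ∀ n (v : V) (p : G.Walk v v), p.length = n → 0 < n → OrientedW G r a p → False := by
  intro n
  induction n using Nat.strong_induction_on with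
  | _ n ih =>
  intro v p hlen hn hor
  by_cases hdup : ∃ u, 2 ≤ p.support.tail.count u
  · obtain ⟨u, hu2⟩ := hdup
    have hmem : u ∈ p.support :=
      List.mem_of_mem_tail (List.count_pos_iff.mp (by omega))
    have key : ∀ (q : G.Walk u u), q.length = n → OrientedW G r a q →
        2 ≤ q.support.tail.count u → False := by
      intro q hqlen hqor hq2
      cases q with
      | nil => simp at hq2
      | @cons _ x _ hadj q' =>
        rw [SimpleGraph.Walk.support_cons, List.tail_cons] at hq2
        have hu' : u ∈ q'.support := List.count_pos_iff.mp (by omega)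
        have hspec := q'.take_spec hu'
        have hcnt : (q'.takeUntil u hu').support.count u = 1 :=
          q'.count_support_takeUntil_eq_one hu'
        have hsupp : q'.support
            = (q'.takeUntil u hu').support ++ (q'.dropUntil u hu').support.tail := by
          rw [← SimpleGraph.Walk.support_append, hspec]
        have hdr : 0 < (q'.dropUntil u hu').length := by
          have h1 : 2 ≤ ((q'.takeUntil u hu').support
              ++ (q'.dropUntil u hu').support.tail).count u := by
            rw [← hsupp]; exact hq2
          rw [List.count_append, hcnt] at h1
          have h2 : (q'.dropUntil u hu').support.tail.count u
              ≤ (q'.dropUntil u hu').support.tail.length := List.count_le_length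
          have h3 : (q'.dropUntil u hu').support.tail.length
              = (q'.dropUntil u hu').length := by
            rw [List.length_tail, SimpleGraph.Walk.length_support]
            omega
          omega
        have hql : (q'.takeUntil u hu').length + (q'.dropUntil u hu').length
            = q'.length := by
          have h4 := congrArg SimpleGraph.Walk.length hspec
          rwa [SimpleGraph.Walk.length_append] at h4
        have hlenq : q'.length + 1 = n := by
          rw [← hqlen]; simp [SimpleGraph.Walk.length_cons]
        refine ih ((SimpleGraph.Walk.cons hadj (q'.takeUntil u hu')).length) ?_ u _ rfl
          (by simp [SimpleGraph.Walk.length_cons]) ?_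
        · rw [SimpleGraph.Walk.length_cons]; omega
        · intro d hd
          rw [SimpleGraph.Walk.darts_cons, List.mem_cons] at hd
          rcases hd with hd | hd
          · exact hqor d (by rw [SimpleGraph.Walk.darts_cons, List.mem_cons]; exact Or.inl hd)
          · refine hqor d ?_
            rw [SimpleGraph.Walk.darts_cons, List.mem_cons]
            exact Or.inr (q'.darts_takeUntil_subset hu' hd)
    refine key (p.rotate u hmem) ?_ ?_ ?_
    · rw [← SimpleGraph.Walk.length_darts, (p.rotate_darts u hmem).perm.length_eq,
        SimpleGraph.Walk.length_darts, hlen]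
    · intro d hd
      exact hor d ((p.rotate_darts u hmem).perm.mem_iff.mp hd)
    · rw [(p.support_rotate u hmem).perm.count_eq]; exact hu2
  · push_neg at hdup
    have hnodup : p.support.tail.Nodup :=
      List.nodup_iff_count_le_one.mpr (fun u => by have := hdup u; omega)
    by_cases hed : p.edges.Nodup
    · have hne : p ≠ SimpleGraph.Walk.nil := by
        intro h; rw [h] at hlen; simp at hlen; omega
      have hcyc : p.IsCycle := ⟨⟨⟨hed⟩, hne⟩, hnodup⟩
      have h1 := hσ v p hcyc
      have h2 : rho r p ≤ sigmaPlus a p := by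
        unfold rho sigmaPlus
        rw [← SimpleGraph.Walk.map_snd_darts, List.map_map]
        exact List.sum_le_sum (fun d hd => hor d hd)
      have h3 := le_max_left (sigmaPlus a p) (sigmaMinus a p)
      omega
    · rw [← List.exists_duplicate_iff_not_nodup] at hed
      obtain ⟨e, he⟩ := hed
      rw [List.duplicate_iff_sublist] at he
      have he' : List.Sublist [e, e] (p.darts.map SimpleGraph.Dart.edge) := he
      obtain ⟨l', hl', hmapeq⟩ := List.sublist_map_iff.mp he'
      have hlen2 : l'.length = 2 := by
        have := congrArg List.length hmapeq
        simpa using this.symm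
      obtain ⟨d1, d2, rfl⟩ := List.length_eq_two.mp hlen2
      simp only [List.map_cons, List.map_nil, List.cons.injEq, and_true] at hmapeq
      obtain ⟨he1, he2⟩ := hmapeq
      have hd1 : d1 ∈ p.darts := hl'.subset (by simp)
      have hd2 : d2 ∈ p.darts := hl'.subset (by simp)
      have hee : d1.edge = d2.edge := by rw [← he1, ← he2]
      rcases (SimpleGraph.dart_edge_eq_iff d1 d2).mp hee with rfl | rfl
      · have hsub : List.Sublist [d1.toProd.2, d1.toProd.2] p.support.tail := by
          have h5 := hl'.map (fun d : G.Dart => d.toProd.2)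
          rwa [show (p.darts.map fun d : G.Dart => d.toProd.2) = p.support.tail from
            SimpleGraph.Walk.map_snd_darts p] at h5
        exact (List.duplicate_iff_sublist.mpr hsub).not_nodup hnodup
      · have h1 := hor d2 hd2
        have h2 := hor d2.symm hd1
        have hk := (key_edge hr hconf d2.adj).1
        simp only [SimpleGraph.Dart.symm] at h2
        exact hk ⟨h2, h1⟩

end Acyclic

section Final

variable {G : SimpleGraph V} {r : V → ℕ} {a : V → V → ℕ}

lemma orientation_acyclic (hr : ∀ v, 0 < r v) (hconf : IsBeadConfig G r a)
    (hσ : ∀ (w : V) (κ : G.Walk w w), κ.IsCycle →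
      max (sigmaPlus a κ) (sigmaMinus a κ) < rho r κ) :
    ∀ v, ¬ Relation.TransGen (inducedOrientation G r a) v v := by
  have build : ∀ {x y : V}, Relation.TransGen (inducedOrientation G r a) x y →
      ∃ p : G.Walk x y, 0 < p.length ∧ OrientedW G r a p := by
    intro x y h
    induction h with
    | single h =>
      refine ⟨SimpleGraph.Walk.cons h.1 SimpleGraph.Walk.nil, by simp, ?_⟩
      intro d hd
      simp only [SimpleGraph.Walk.darts_cons, SimpleGraph.Walk.darts_nil,
        List.mem_singleton] at hd
      subst hd
      exact h.2
    | @tail b c hab hbc ih =>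
      obtain ⟨p, hp, horp⟩ := ih
      refine ⟨p.append (SimpleGraph.Walk.cons hbc.1 SimpleGraph.Walk.nil), ?_, ?_⟩
      · rw [SimpleGraph.Walk.length_append]; omega
      · intro d hd
        rw [SimpleGraph.Walk.darts_append, List.mem_append] at hd
        rcases hd with hd | hd
        · exact horp d hd
        · simp only [SimpleGraph.Walk.darts_cons, SimpleGraph.Walk.darts_nil,
            List.mem_singleton] at hd
          subst hd
          exact hbc.2
  intro v hv
  obtain ⟨p, hp, horp⟩ := build hv
  exact no_oriented_closed hr hconf hσ p.length v p rfl hp horp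

lemma exists_enabled [Fintype V] (hr : ∀ v, 0 < r v) (hconf : IsBeadConfig G r a)
    (hac : ∀ v, ¬ Relation.TransGen (inducedOrientation G r a) v v)
    (hne : Nonempty V) : ∃ v, Enabled G r a v := by
  by_contra hcon
  push_neg at hcon
  have step : ∀ v, ∃ u, inducedOrientation G r a v u := by
    intro v
    have h1 := hcon v
    unfold Enabled at h1
    push_neg at h1
    obtain ⟨u, hadj, hlt⟩ := h1
    have hk := key_edge hr hconf hadj
    refine ⟨u, hadj, ?_⟩
    rcases hk.2 with h | h
    · omega
    · exact h
  choose f hf using step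
  obtain ⟨v0⟩ := hne
  have htg : ∀ (k : ℕ) (x : V),
      Relation.TransGen (inducedOrientation G r a) x (f^[k+1] x) := by
    intro k
    induction k with
    | zero => intro x; simpa using Relation.TransGen.single (hf x)
    | succ k ih =>
      intro x
      rw [Function.iterate_succ_apply']
      exact (ih x).tail (hf _)
  obtain ⟨i, j, hij, heq⟩ :=
    Finite.exists_ne_map_eq_of_infinite (fun n : ℕ => f^[n] v0)
  rcases Nat.lt_or_ge i j with hlt | hge
  · obtain ⟨k, rfl⟩ : ∃ k, j = i + (k + 1) := ⟨j - i - 1, by omega⟩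
    have h2 := htg k (f^[i] v0)
    rw [← Function.iterate_add_apply, Nat.add_comm] at h2
    exact hac _ (heq ▸ h2)
  · have hlt : j < i := by
      rcases Nat.lt_or_ge j i with h | h
      · exact h
      · exact absurd (Nat.le_antisymm h hge) hij
    obtain ⟨k, rfl⟩ : ∃ k, i = j + (k + 1) := ⟨i - j - 1, by omega⟩
    have h2 := htg k (f^[j] v0)
    rw [← Function.iterate_add_apply, Nat.add_comm] at h2
    exact hac _ (heq ▸ h2)

end Final


/-- Every bead-reversal computation started from a configuration with
`σ(κ) < ρ(κ)` for every simple cycle `κ` is deadlock-free: every reachable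
configuration again satisfies `σ(κ) < ρ(κ)` for every simple cycle `κ`, its induced
orientation is acyclic, and hence (if `G` has at least one vertex) at least one
vertex is enabled. -/
theorem bead_reversal_deadlock_free [Fintype V]
    (G : SimpleGraph V) (hG : G.Connected)
    (r : V → ℕ) (hr : ∀ v, 0 < r v)
    (a0 : V → V → ℕ) (hconf : IsBeadConfig G r a0)
    (hσ0 : ∀ (w : V) (κ : G.Walk w w), κ.IsCycle →
      max (sigmaPlus a0 κ) (sigmaMinus a0 κ) < rho r κ) :
    ∀ a : V → V → ℕ, Relation.ReflTransGen (BeadStepRel G r) a0 a →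
      (∀ (w : V) (κ : G.Walk w w), κ.IsCycle →
          max (sigmaPlus a κ) (sigmaMinus a κ) < rho r κ) ∧
        (∀ v, ¬ Relation.TransGen (inducedOrientation G r a) v v) ∧
        (Nonempty V → ∃ v, Enabled G r a v) := by
  intro a ha
  have inv : IsBeadConfig G r a ∧ ∀ (w : V) (κ : G.Walk w w), κ.IsCycle →
      max (sigmaPlus a κ) (sigmaMinus a κ) < rho r κ := by
    induction ha with
    | refl => exact ⟨hconf, hσ0⟩
    | tail hsteps hstep ih =>
      obtain ⟨hc, hs⟩ := ih
      obtain ⟨v, hv, rfl⟩ := hstep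
      refine ⟨beadStep_config hc hv, ?_⟩
      intro w κ hκ
      rw [sigmaPlus_beadStep hv, sigmaMinus_beadStep hv]
      exact hs w κ hκ
  obtain ⟨hc, hs⟩ := inv
  have hac := orientation_acyclic hr hc hs
  exact ⟨hs, hac, fun hne => exists_enabled hr hc hac hne⟩
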